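/- arXiv:1402.2245 — 2 statements merged into one kernel-verified Lean document; each statement's English description precedes it below -/
import Mathlib

section
/- Every (possibly infinitary) term rewriting system that is disjoint (no function symbol occurs both in a left-hand side and in a right-hand side of its rules) and has no collapsing rules is strongly normalizing in the infinitary sense: it admits no divergent strongly continuous reduction sequence. -/
namespace IRW

abbrev Pos := List ℕ

def arity {Sig V : Type} (ar : Sig → ℕ) : Sig ⊕ V → ℕ
  | Sum.inl f => ar f
  | Sum.inr _ => 0

abbrev PTerm (Sig V : Type) := Pos → Option (Sig ⊕ V)

variable {Sig V : Type}

def posOf (t : PTerm Sig V) : Set Pos := {p | (t p).isSome}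

def IsTerm (ar : Sig → ℕ) (t : PTerm Sig V) : Prop :=
  ([] : Pos) ∈ posOf t ∧
  (∀ p q : Pos, p ++ q ∈ posOf t → p ∈ posOf t) ∧
  (∀ (p : Pos) (h : Sig ⊕ V), t p = some h →
    ∀ i : ℕ, (p ++ [i]) ∈ posOf t ↔ 1 ≤ i ∧ i ≤ arity ar h)

def varT (x : V) : PTerm Sig V := fun p => if p = [] then some (Sum.inr x) else none

def mkFun (ar : Sig → ℕ) (f : Sig) (ts : ℕ → PTerm Sig V) : PTerm Sig V := fun p =>
  match p with
  | [] => some (Sum.inl f)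
  | i :: q => if 1 ≤ i ∧ i ≤ ar f then ts i q else none

def subAt (t : PTerm Sig V) (p : Pos) : PTerm Sig V := fun q => t (p ++ q)

def replAt (t u : PTerm Sig V) (p : Pos) : PTerm Sig V := fun q =>
  if p <+: q then u (q.drop p.length) else t q

def Disj (p q : Pos) : Prop := ¬ p <+: q ∧ ¬ q <+: p

open Classical in
noncomputable def tdist (t u : PTerm Sig V) : ℝ :=
  if t = u then 0
  else (2 : ℝ)⁻¹ ^ sInf {n : ℕ | ∃ p : Pos, p.length = n ∧ t p ≠ u p}

open Classical in
noncomputable def substExt (σ : V → PTerm Sig V) (t : PTerm Sig V) : PTerm Sig V := fun p =>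
  if h : ∃ x : V, ∃ p₀ q : Pos, p = p₀ ++ q ∧ t p₀ = some (Sum.inr x)
  then σ h.choose h.choose_spec.choose_spec.choose
  else t p

def IsStep (rules : Set (PTerm Sig V × PTerm Sig V)) (s : PTerm Sig V) (p : Pos)
    (t : PTerm Sig V) : Prop :=
  p ∈ posOf s ∧
  ∃ lr ∈ rules, ∃ σ : V → PTerm Sig V,
    subAt s p = substExt σ lr.1 ∧ t = replAt s (substExt σ lr.2) p

structure RedSeq (ar : Sig → ℕ) (rules : Set (PTerm Sig V × PTerm Sig V))
    (β : Ordinal) where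
  src : Ordinal → PTerm Sig V
  rpos : Ordinal → Pos
  tgt : Ordinal → PTerm Sig V
  srcTerm : ∀ α, α < β → IsTerm ar (src α)
  tgtTerm : ∀ α, α < β → IsTerm ar (tgt α)
  isStep : ∀ α, α < β → IsStep rules (src α) (rpos α) (tgt α)
  succCoh : ∀ α, α + 1 < β → src (α + 1) = tgt α
  limSrc : ∀ β₀, β₀ < β → Order.IsSuccLimit β₀ → ∀ n : ℕ,
    ∃ α₀, α₀ < β₀ ∧ ∀ α, α₀ < α → α < β₀ → tdist (tgt α) (src β₀) < (2 : ℝ)⁻¹ ^ n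
  limDepth : ∀ β₀, β₀ < β → Order.IsSuccLimit β₀ → ∀ n : ℕ,
    ∃ α₀, α₀ < β₀ ∧ ∀ α, α₀ < α → α < β₀ → n < (rpos α).length

def RedSeq.Converges {ar : Sig → ℕ} {rules : Set (PTerm Sig V × PTerm Sig V)} {β : Ordinal}
    (Sq : RedSeq ar rules β) (u : PTerm Sig V) : Prop :=
  (β = 0 ∧ u = Sq.src 0) ∨
  (∃ α, β = α + 1 ∧ u = Sq.tgt α) ∨
  (Order.IsSuccLimit β ∧
    (∀ n : ℕ, ∃ α₀, α₀ < β ∧ ∀ α, α₀ < α → α < β → tdist (Sq.tgt α) u < (2 : ℝ)⁻¹ ^ n) ∧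
    (∀ n : ℕ, ∃ α₀, α₀ < β ∧ ∀ α, α₀ < α → α < β → n < (Sq.rpos α).length))

def NF (rules : Set (PTerm Sig V × PTerm Sig V)) (t : PTerm Sig V) : Prop :=
  ∀ p u, ¬ IsStep rules t p u

-- ################ auxiliary lemmas ################

lemma varT_of_root_var {ar : Sig → ℕ} {t : PTerm Sig V} (ht : IsTerm ar t) {x : V}
    (h : t [] = some (Sum.inr x)) : t = varT x := by
  funext p
  match p with
  | [] => simpa [varT] using h
  | i :: q =>
    have h1 : ([i] : Pos) ∉ posOf t := by
      intro hm
      have := (ht.2.2 [] (Sum.inr x) h i).mp (by simpa using hm)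
      simp [arity] at this
      omega
    have h2 : t (i :: q) = none := by
      by_contra hne
      exact h1 (ht.2.1 [i] q (by
        show (t ([i] ++ q)).isSome
        simpa using Option.isSome_iff_ne_none.mpr hne))
    simp [varT, h2]

lemma root_fun {ar : Sig → ℕ} {t : PTerm Sig V} (ht : IsTerm ar t)
    (hnv : ∀ x : V, t ≠ varT x) : ∃ f, t [] = some (Sum.inl f) := by
  obtain ⟨h, hh⟩ := Option.isSome_iff_exists.mp ht.1
  cases h with
  | inl f => exact ⟨f, hh⟩
  | inr x => exact absurd (varT_of_root_var ht hh) (hnv x)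

lemma substExt_nil {σ : V → PTerm Sig V} {t : PTerm Sig V} {f : Sig}
    (h : t [] = some (Sum.inl f)) : substExt σ t [] = some (Sum.inl f) := by
  unfold substExt
  rw [dif_neg, h]
  rintro ⟨x, p₀, q, hpq, ht⟩
  have hp0 : p₀ = [] := (List.append_eq_nil_iff.mp hpq.symm).1
  rw [hp0, h] at ht
  exact (Sum.inl_ne_inr (Option.some_injective _ ht))

section Rules

variable {ar : Sig → ℕ} {rules : Set (PTerm Sig V × PTerm Sig V)}

lemma step_src_root (hterm : ∀ lr ∈ rules, IsTerm ar lr.1 ∧ IsTerm ar lr.2)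
    (hnotvar : ∀ lr ∈ rules, ∀ x : V, lr.1 ≠ varT x)
    {s t : PTerm Sig V} {p : Pos} (hstep : IsStep rules s p t) :
    ∃ lr ∈ rules, ∃ f, lr.1 [] = some (Sum.inl f) ∧ s p = some (Sum.inl f) := by
  obtain ⟨hp, lr, hlr, σ, hsub, htgt⟩ := hstep
  obtain ⟨f, hf⟩ := root_fun (hterm lr hlr).1 (hnotvar lr hlr)
  have h0 : s (p ++ []) = substExt σ lr.1 [] := congrFun hsub []
  rw [List.append_nil, substExt_nil hf] at h0
  exact ⟨lr, hlr, f, hf, h0⟩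

lemma step_tgt_root (hterm : ∀ lr ∈ rules, IsTerm ar lr.1 ∧ IsTerm ar lr.2)
    (hnocoll : ∀ lr ∈ rules, ∀ x : V, lr.2 ≠ varT x)
    {s t : PTerm Sig V} {p : Pos} (hstep : IsStep rules s p t) :
    ∃ lr ∈ rules, ∃ g, lr.2 [] = some (Sum.inl g) ∧ t p = some (Sum.inl g) := by
  obtain ⟨hp, lr, hlr, σ, hsub, htgt⟩ := hstep
  obtain ⟨g, hg⟩ := root_fun (hterm lr hlr).2 (hnocoll lr hlr)
  refine ⟨lr, hlr, g, hg, ?_⟩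
  rw [htgt]
  show (if p <+: p then substExt σ lr.2 (p.drop p.length) else s p) = _
  rw [if_pos (List.prefix_refl p), List.drop_length, substExt_nil hg]

end Rules

lemma step_not_prefix {rules : Set (PTerm Sig V × PTerm Sig V)} {s t : PTerm Sig V} {p q : Pos}
    (hstep : IsStep rules s p t) (h : ¬ p <+: q) : t q = s q := by
  obtain ⟨hp, lr, hlr, σ, hsub, htgt⟩ := hstep
  rw [htgt]
  exact if_neg h

lemma tdist_lt_iff {t u : PTerm Sig V} {n : ℕ} :
    tdist t u < (2 : ℝ)⁻¹ ^ n ↔ ∀ p : Pos, p.length ≤ n → t p = u p := by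
  unfold tdist
  split_ifs with h
  · subst h
    constructor
    · intro _ p _; rfl
    · intro _; positivity
  · have hne : ∃ p : Pos, t p ≠ u p := by
      by_contra hc
      push_neg at hc
      exact h (funext hc)
    obtain ⟨p₀, hp₀⟩ := hne
    have hS : {n : ℕ | ∃ p : Pos, p.length = n ∧ t p ≠ u p}.Nonempty := ⟨p₀.length, p₀, rfl, hp₀⟩
    rw [pow_lt_pow_iff_right_of_lt_one₀ (by norm_num) (by norm_num)]
    constructor
    · intro hlt p hlen
      by_contra hne'
      have : sInf {n : ℕ | ∃ p : Pos, p.length = n ∧ t p ≠ u p} ≤ p.length :=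
        Nat.sInf_le ⟨p, rfl, hne'⟩
      omega
    · intro hag
      obtain ⟨p, hlen, hne'⟩ := Nat.sInf_mem hS
      by_contra hc
      exact hne' (hag p (by omega))

section Seq

variable {ar : Sig → ℕ} {rules : Set (PTerm Sig V × PTerm Sig V)} {β : Ordinal}

lemma succ_lt_of_lt {α β : Ordinal} (h : Order.IsSuccLimit β) (ha : α < β) : α + 1 < β := by
  rw [Ordinal.add_one_eq_succ]; exact h.succ_lt ha

lemma lt_succ_self (α : Ordinal) : α < α + 1 := by
  rw [Ordinal.add_one_eq_succ]; exact Order.lt_succ α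

lemma stab (Sq : RedSeq ar rules β) (p : Pos) :
    ∀ α₂ α₁, α₁ < α₂ → α₂ < β →
      (∀ γ, α₁ < γ → γ < α₂ → ¬ Sq.rpos γ <+: p) → Sq.src α₂ p = Sq.tgt α₁ p := by
  intro α₂
  induction α₂ using Ordinal.induction with
  | _ α₂ IH =>
  intro α₁ h12 h2 hno
  rcases Ordinal.zero_or_succ_or_isSuccLimit α₂ with h0 | ⟨γ, hγ⟩ | hlim
  · exact absurd (h0 ▸ h12) (not_lt_zero (a := α₁))
  · rw [← Ordinal.add_one_eq_succ] at hγ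
    subst hγ
    have hγβ : γ < β := (lt_succ_self γ).trans h2
    rcases eq_or_lt_of_le (by
      have := h12; rw [Ordinal.add_one_eq_succ] at this; exact Order.lt_succ_iff.mp this :
        α₁ ≤ γ) with rfl | h1γ
    · rw [Sq.succCoh α₁ h2]
    · have hloc : Sq.tgt γ p = Sq.src γ p :=
        step_not_prefix (Sq.isStep γ hγβ) (hno γ h1γ (lt_succ_self γ))
      have hIH := IH γ (lt_succ_self γ) α₁ h1γ hγβ
        (fun δ hd1 hd2 => hno δ hd1 (hd2.trans (lt_succ_self γ)))
      rw [Sq.succCoh γ h2, hloc, hIH]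
  · obtain ⟨α₀, hα₀, hd⟩ := Sq.limSrc α₂ h2 hlim p.length
    have hmax : max α₀ α₁ < α₂ := max_lt hα₀ h12
    set γ := max α₀ α₁ + 1 with hγdef
    have hγ2 : γ < α₂ := succ_lt_of_lt hlim hmax
    have h1γ : α₁ < γ := lt_of_le_of_lt (le_max_right _ _) (lt_succ_self _)
    have h0γ : α₀ < γ := lt_of_le_of_lt (le_max_left _ _) (lt_succ_self _)
    have hag : Sq.tgt γ p = Sq.src α₂ p := tdist_lt_iff.mp (hd γ h0γ hγ2) p le_rfl
    have hloc : Sq.tgt γ p = Sq.src γ p :=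
      step_not_prefix (Sq.isStep γ (hγ2.trans h2)) (hno γ h1γ hγ2)
    have hIH := IH γ hγ2 α₁ h1γ (hγ2.trans h2)
      (fun δ hd1 hd2 => hno δ hd1 (hd2.trans hγ2))
    rw [← hag, hloc, hIH]

lemma once (Sq : RedSeq ar rules β)
    (hterm : ∀ lr ∈ rules, IsTerm ar lr.1 ∧ IsTerm ar lr.2)
    (hnotvar : ∀ lr ∈ rules, ∀ x : V, lr.1 ≠ varT x)
    (hnocoll : ∀ lr ∈ rules, ∀ x : V, lr.2 ≠ varT x)
    (hdisj : ∀ lr ∈ rules, ∀ lr' ∈ rules, ∀ (f : Sig) (p q : Pos),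
      lr.1 p = some (Sum.inl f) → lr'.2 q ≠ some (Sum.inl f))
    {δ : Ordinal} {p : Pos}
    (hno : ∀ γ, δ < γ → γ < β → Sq.rpos γ <+: p → Sq.rpos γ = p) :
    ∀ α α', δ < α → α < α' → α' < β → Sq.rpos α = p → Sq.rpos α' ≠ p := by
  intro α α' hδα hαα' hα'β hα hp'
  have hS : {γ : Ordinal | α < γ ∧ γ ≤ α' ∧ Sq.rpos γ = p}.Nonempty := ⟨α', hαα', le_rfl, hp'⟩
  obtain ⟨γ₀, ⟨hαγ₀, hγ₀α', hpγ₀⟩, hmin⟩ := Ordinal.lt_wf.has_min _ hS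
  have hγ₀β : γ₀ < β := lt_of_le_of_lt hγ₀α' hα'β
  have hstab : Sq.src γ₀ p = Sq.tgt α p := by
    apply stab Sq p γ₀ α hαγ₀ hγ₀β
    intro γ h1 h2 hpre
    have hγβ : γ < β := (h2.trans_le hγ₀α').trans hα'β
    have heq := hno γ (hδα.trans h1) hγβ hpre
    exact hmin γ ⟨h1, (le_of_lt h2).trans hγ₀α', heq⟩ h2
  obtain ⟨lr, hlr, g, hg, htp⟩ := step_tgt_root hterm hnocoll (Sq.isStep α (hαα'.trans hα'β))
  rw [hα] at htp
  obtain ⟨lr', hlr', f, hf, hsp⟩ := step_src_root hterm hnotvar (Sq.isStep γ₀ hγ₀β)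
  rw [hpγ₀] at hsp
  have : some (Sum.inl f : Sig ⊕ V) = some (Sum.inl g) := by
    rw [← hsp, hstab, htp]
  have hfg : f = g := by
    injection this with h'; exact Sum.inl_injective h'
  exact hdisj lr' hlr' lr hlr f [] [] hf (hfg ▸ hg)

lemma pairwise_tgt (Sq : RedSeq ar rules β) {δ : Ordinal} {m : ℕ}
    (h : ∀ γ, δ < γ → γ < β → m < (Sq.rpos γ).length) :
    ∀ α α' (q : Pos), δ < α → α < β → δ < α' → α' < β → q.length ≤ m →
      Sq.tgt α q = Sq.tgt α' q := by
  have asym : ∀ α α' (q : Pos), δ < α → α < α' → α' < β → q.length ≤ m →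
      Sq.tgt α q = Sq.tgt α' q := by
    intro α α' q hδ hlt hβ' hq
    have hloc : Sq.tgt α' q = Sq.src α' q := by
      apply step_not_prefix (Sq.isStep α' hβ')
      intro hpre
      have h1 := hpre.length_le
      have h2 := h α' (hδ.trans hlt) hβ'
      omega
    have hst := stab Sq q α' α hlt hβ' (fun γ h1 h2 hpre => by
      have := hpre.length_le
      have := h γ (hδ.trans h1) (h2.trans hβ')
      omega)
    rw [hloc, hst]
  intro α α' q h1 h2 h3 h4 hq
  rcases lt_trichotomy α α' with h | rfl | h
  · exact asym α α' q h1 h h4 hq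
  · rfl
  · exact (asym α' α q h3 h h2 hq).symm

end Seq

lemma levels_finite {ar : Sig → ℕ} {w : PTerm Sig V} (hw : IsTerm ar w) :
    ∀ k, {q : Pos | q.length = k ∧ (w q).isSome}.Finite := by
  intro k
  induction k with
  | zero =>
    apply Set.Finite.subset (Set.finite_singleton ([] : Pos))
    rintro q ⟨hl, _⟩
    exact List.eq_nil_of_length_eq_zero hl
  | succ k IH =>
    classical
    set A : Pos → ℕ := fun q' => match w q' with
      | some h => arity ar h
      | none => 0 with hA
    apply Set.Finite.subset
      (Set.Finite.biUnion IH (fun q' _ => (Set.finite_Icc 1 (A q')).image (fun i => q' ++ [i])))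
    rintro q ⟨hl, hs⟩
    have hq : q ≠ [] := by intro h; rw [h] at hl; simp at hl
    set i := q.getLast hq with hi
    set q' := q.dropLast with hq'
    have hqeq : q' ++ [i] = q := List.dropLast_append_getLast hq
    have hlq' : q'.length = k := by
      rw [hq', List.length_dropLast, hl]; omega
    have hq's : (w q').isSome := hw.2.1 q' [i] (by show (w (q' ++ [i])).isSome; rw [hqeq]; exact hs)
    obtain ⟨h, hh⟩ := Option.isSome_iff_exists.mp hq's
    have hbound := (hw.2.2 q' h hh i).mp (by show (w (q' ++ [i])).isSome; rw [hqeq]; exact hs)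
    simp only [Set.mem_iUnion]
    refine ⟨q', ⟨hlq', hq's⟩, ?_⟩
    refine ⟨i, ?_, hqeq⟩
    have hAq : A q' = arity ar h := by rw [hA]; simp [hh]
    exact Set.mem_Icc.mpr ⟨hbound.1, hAq ▸ hbound.2⟩

lemma depth_bound {ar : Sig → ℕ} {rules : Set (PTerm Sig V × PTerm Sig V)} {β : Ordinal}
    (Sq : RedSeq ar rules β) (hlim : Order.IsSuccLimit β)
    (hterm : ∀ lr ∈ rules, IsTerm ar lr.1 ∧ IsTerm ar lr.2)
    (hnotvar : ∀ lr ∈ rules, ∀ x : V, lr.1 ≠ varT x)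
    (hnocoll : ∀ lr ∈ rules, ∀ x : V, lr.2 ≠ varT x)
    (hdisj : ∀ lr ∈ rules, ∀ lr' ∈ rules, ∀ (f : Sig) (p q : Pos),
      lr.1 p = some (Sum.inl f) → lr'.2 q ≠ some (Sum.inl f)) :
    ∀ n : ℕ, ∃ α₀, α₀ < β ∧ ∀ α, α₀ < α → α < β → n < (Sq.rpos α).length := by
  intro n
  induction n with
  | zero =>
    by_contra hcon
    push_neg at hcon
    obtain ⟨α, h0α, hαβ, hα⟩ := hcon 0 hlim.pos
    obtain ⟨α', hαα', hα'β, hα'⟩ := hcon α hαβ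
    have hnil : Sq.rpos α = [] := List.eq_nil_of_length_eq_zero (by omega)
    have hnil' : Sq.rpos α' = [] := List.eq_nil_of_length_eq_zero (by omega)
    exact once Sq hterm hnotvar hnocoll hdisj
      (fun γ _ _ hpre => List.prefix_nil.mp hpre) α α' h0α hαα' hα'β hnil hnil'
  | succ n IH =>
    obtain ⟨α₀, hα₀β, h₀⟩ := IH
    set α₁ := α₀ + 1 with hα₁def
    have hα₀α₁ : α₀ < α₁ := lt_succ_self α₀
    have hα₁β : α₁ < β := succ_lt_of_lt hlim hα₀β
    set w := Sq.tgt α₁ with hwdef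
    have hw : IsTerm ar w := Sq.tgtTerm α₁ hα₁β
    set F : Set Ordinal := {α | α₁ < α ∧ α < β ∧ (Sq.rpos α).length = n + 1} with hFdef
    -- image of F under rpos is contained in a finite set
    classical
    set A : Pos → ℕ := fun q' => match w q' with
      | some h => arity ar h
      | none => 0 with hA
    have hG : (⋃ q' ∈ {q : Pos | q.length = n ∧ (w q).isSome},
        (fun i => q' ++ [i]) '' Set.Icc 1 (A q')).Finite :=
      Set.Finite.biUnion (levels_finite hw n)
        (fun q' _ => (Set.finite_Icc 1 (A q')).image (fun i => q' ++ [i]))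
    have hsrc_eq : ∀ α, α₁ < α → α < β → ∀ q : Pos, q.length ≤ n → Sq.src α q = w q := by
      intro α h1 h2 q hq
      apply stab Sq q α α₁ h1 h2
      intro γ hg1 hg2 hpre
      have := hpre.length_le
      have := h₀ γ (hα₀α₁.trans hg1) (hg2.trans h2)
      omega
    have himage : Sq.rpos '' F ⊆ ⋃ q' ∈ {q : Pos | q.length = n ∧ (w q).isSome},
        (fun i => q' ++ [i]) '' Set.Icc 1 (A q') := by
      rintro _ ⟨α, ⟨h1, h2, h3⟩, rfl⟩
      have hpos : (Sq.src α (Sq.rpos α)).isSome := (Sq.isStep α h2).1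
      have hq : Sq.rpos α ≠ [] := by intro h; rw [h] at h3; simp at h3
      set i := (Sq.rpos α).getLast hq with hi
      set q' := (Sq.rpos α).dropLast with hq'
      have hqeq : q' ++ [i] = Sq.rpos α := List.dropLast_append_getLast hq
      have hlq' : q'.length = n := by rw [hq', List.length_dropLast, h3]; omega
      have hq's : (Sq.src α q').isSome := (Sq.srcTerm α h2).2.1 q' [i]
        (by show (Sq.src α (q' ++ [i])).isSome; rw [hqeq]; exact hpos)
      obtain ⟨h, hh⟩ := Option.isSome_iff_exists.mp hq's
      have hbound := ((Sq.srcTerm α h2).2.2 q' h hh i).mp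
        (by show (Sq.src α (q' ++ [i])).isSome; rw [hqeq]; exact hpos)
      have hwq' : w q' = some h := by rw [← hsrc_eq α h1 h2 q' (le_of_eq hlq'), hh]
      simp only [Set.mem_iUnion]
      refine ⟨q', ⟨hlq', by rw [hwq']; rfl⟩, ?_⟩
      refine ⟨i, ?_, hqeq⟩
      have hAq : A q' = arity ar h := by rw [hA]; simp [hwq']
      exact Set.mem_Icc.mpr ⟨hbound.1, hAq ▸ hbound.2⟩
    have hinj : Set.InjOn Sq.rpos F := by
      intro a ha b hb hab
      by_contra hne
      have key : ∀ x y, x ∈ F → y ∈ F → x < y → Sq.rpos x = Sq.rpos y → False := by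
        intro x y hx hy hxy hpeq
        refine once Sq hterm hnotvar hnocoll hdisj (δ := α₁) (p := Sq.rpos x)
          ?_ x y hx.1 hxy hy.2.1 rfl hpeq.symm
        intro γ hg1 hg2 hpre
        have hl1 := hpre.length_le
        have hl2 := h₀ γ (hα₀α₁.trans hg1) hg2
        have hl3 : (Sq.rpos x).length = n + 1 := hx.2.2
        exact hpre.eq_of_length (by omega)
      rcases lt_trichotomy a b with h | h | h
      · exact key a b ha hb h hab
      · exact hne h
      · exact key b a hb ha h hab.symm
    have hF : F.Finite := Set.Finite.of_finite_image (hG.subset himage) hinj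
    rcases F.eq_empty_or_nonempty with hFe | hFne
    · refine ⟨α₁, hα₁β, fun α h1 h2 => ?_⟩
      have hn : n < (Sq.rpos α).length := h₀ α (hα₀α₁.trans h1) h2
      have : (Sq.rpos α).length ≠ n + 1 := by
        intro hlen
        have : α ∈ F := ⟨h1, h2, hlen⟩
        rw [hFe] at this
        exact this
      omega
    · have hsup : sSup F ∈ F := hFne.csSup_mem hF
      refine ⟨max α₁ (sSup F), max_lt hα₁β hsup.2.1, fun α h1 h2 => ?_⟩
      have hα₁α : α₁ < α := lt_of_le_of_lt (le_max_left _ _) h1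
      have hn : n < (Sq.rpos α).length := h₀ α (hα₀α₁.trans hα₁α) h2
      have : (Sq.rpos α).length ≠ n + 1 := by
        intro hlen
        have hmem : α ∈ F := ⟨hα₁α, h2, hlen⟩
        have : α ≤ sSup F := le_csSup hF.bddAbove hmem
        have : α ≤ max α₁ (sSup F) := le_trans this (le_max_right _ _)
        exact absurd h1 (not_lt.mpr this)
      omega


/-- A disjoint TRS without collapsing rules is `SN^∞`: every strongly continuous
reduction sequence is strongly convergent. -/
theorem stmt13 {Sig V : Type} (ar : Sig → ℕ)
    (rules : Set (PTerm Sig V × PTerm Sig V))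
    (hterm : ∀ lr ∈ rules, IsTerm ar lr.1 ∧ IsTerm ar lr.2)
    (hfin : ∀ lr ∈ rules, (posOf lr.1).Finite)
    (hnotvar : ∀ lr ∈ rules, ∀ x : V, lr.1 ≠ varT x)
    (hvars : ∀ lr ∈ rules, ∀ (x : V) (p : Pos),
      lr.2 p = some (Sum.inr x) → ∃ q : Pos, lr.1 q = some (Sum.inr x))
    (hdisj : ∀ lr ∈ rules, ∀ lr' ∈ rules, ∀ (f : Sig) (p q : Pos),
      lr.1 p = some (Sum.inl f) → lr'.2 q ≠ some (Sum.inl f))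
    (hnocoll : ∀ lr ∈ rules, ∀ x : V, lr.2 ≠ varT x) :
    ∀ (β : Ordinal) (Sq : RedSeq ar rules β), ∃ u : PTerm Sig V, Sq.Converges u := by
  intro β Sq
  rcases Ordinal.zero_or_succ_or_isSuccLimit β with rfl | ⟨α, hβ⟩ | hlim
  · exact ⟨Sq.src 0, Or.inl ⟨rfl, rfl⟩⟩
  · exact ⟨Sq.tgt α, Or.inr (Or.inl ⟨α, by rw [← hβ, Ordinal.add_one_eq_succ], rfl⟩)⟩
  · have D := depth_bound Sq hlim hterm hnotvar hnocoll hdisj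
    choose A hA hA' using D
    set B : ℕ → Ordinal := fun n => (Finset.range (n + 1)).sup A with hBdef
    have hBβ : ∀ n, B n < β := by
      intro n
      apply Finset.sup_lt_iff (by rw [Ordinal.bot_eq_zero]; exact hlim.pos) |>.mpr
      intro i _
      exact hA i
    have hAB : ∀ n, A n ≤ B n := fun n => Finset.le_sup (Finset.self_mem_range_succ n)
    have hBmono : Monotone B := fun a b hab =>
      Finset.sup_mono (Finset.range_subset_range.mpr (by omega))
    have hB : ∀ n α, B n < α → α < β → n < (Sq.rpos α).length :=
      fun n α h1 h2 => hA' n α (lt_of_le_of_lt (hAB n) h1) h2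
    refine ⟨fun q => Sq.tgt (B q.length + 1) q, Or.inr (Or.inr ⟨hlim, ?_, ?_⟩)⟩
    · intro n
      refine ⟨B n, hBβ n, fun α h1 h2 => ?_⟩
      rw [tdist_lt_iff]
      intro q hq
      exact pairwise_tgt Sq (δ := B q.length) (m := q.length)
        (fun γ hg1 hg2 => hB q.length γ hg1 hg2) α (B q.length + 1) q
        (lt_of_le_of_lt (hBmono hq) h1) h2 (lt_succ_self _)
        (succ_lt_of_lt hlim (hBβ _)) le_rfl
    · intro n
      exact ⟨B n, hBβ n, fun α h1 h2 => hB n α h1 h2⟩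

end IRW
end

section
/- Let ψ be an infinitary multistep admitting an infinite collapsing sequence starting at the root position ε. Then ψ is not weakly normalizing with respect to the target TRS tgt_T: no reduction of ψ in tgt_T reaches a normal form. -/
namespace IRW

variable {Sig V : Type}

structure RuleSys (Sig : Type) (ar : Sig → ℕ) where
  R : Type
  rar : R → ℕ
  lhs : R → PTerm Sig ℕ
  rhs : R → PTerm Sig ℕ

def arS (ar : Sig → ℕ) (S : RuleSys Sig ar) : (Sig ⊕ S.R) → ℕ
  | Sum.inl f => ar f
  | Sum.inr μ => S.rar μ

def liftT {ar : Sig → ℕ} (S : RuleSys Sig ar) (t : PTerm Sig ℕ) : PTerm (Sig ⊕ S.R) ℕ :=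
  fun p => (t p).map (Sum.map Sum.inl id)

def Closed (t : PTerm Sig V) : Prop := ∀ p x, t p ≠ some (Sum.inr x)

def CollSeq {ar : Sig → ℕ} (S : RuleSys Sig ar) (ψ : PTerm (Sig ⊕ S.R) ℕ)
    (ps : ℕ → Pos) (n : ℕ) : Prop :=
  ∀ i : ℕ, i + 1 < n → ∃ (μ : S.R) (j : ℕ),
    ψ (ps i) = some (Sum.inl (Sum.inr μ)) ∧ 1 ≤ j ∧ j ≤ S.rar μ ∧
    S.rhs μ = varT j ∧ ps (i + 1) = ps i ++ [j]

def CollSeqInf {ar : Sig → ℕ} (S : RuleSys Sig ar) (ψ : PTerm (Sig ⊕ S.R) ℕ)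
    (ps : ℕ → Pos) : Prop :=
  ∀ i : ℕ, ∃ (μ : S.R) (j : ℕ),
    ψ (ps i) = some (Sum.inl (Sum.inr μ)) ∧ 1 ≤ j ∧ j ≤ S.rar μ ∧
    S.rhs μ = varT j ∧ ps (i + 1) = ps i ++ [j]

def ruleHead {ar : Sig → ℕ} (S : RuleSys Sig ar) (μ : S.R) : PTerm (Sig ⊕ S.R) ℕ :=
  mkFun (arS ar S) (Sum.inr μ) (fun i => varT i)

def srcRules {ar : Sig → ℕ} (S : RuleSys Sig ar) :
    Set (PTerm (Sig ⊕ S.R) ℕ × PTerm (Sig ⊕ S.R) ℕ) :=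
  {lr | ∃ μ : S.R, lr = (ruleHead S μ, liftT S (S.lhs μ))}

def tgtRules {ar : Sig → ℕ} (S : RuleSys Sig ar) :
    Set (PTerm (Sig ⊕ S.R) ℕ × PTerm (Sig ⊕ S.R) ℕ) :=
  {lr | ∃ μ : S.R, lr = (ruleHead S μ, liftT S (S.rhs μ))}

section Helpers

variable {Sig : Type} {ar : Sig → ℕ} (S : RuleSys Sig ar)

def HasColl (t : PTerm (Sig ⊕ S.R) ℕ) : Prop :=
  ∃ ps : ℕ → Pos, ps 0 = [] ∧ CollSeqInf S t ps

lemma varT_inj {j j' : ℕ} (h : (varT j : PTerm Sig ℕ) = varT j') : j = j' := by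
  have := congrFun h ([] : Pos)
  simp [varT] at this
  exact this

lemma ruleHead_nil (μ : S.R) : ruleHead S μ [] = some (Sum.inl (Sum.inr μ)) := rfl

lemma ruleHead_inr {μ : S.R} {p : Pos} {x : ℕ}
    (h : ruleHead S μ p = some (Sum.inr x)) :
    p = [x] ∧ 1 ≤ x ∧ x ≤ S.rar μ := by
  match p with
  | [] => simp [ruleHead, mkFun] at h
  | i :: q =>
    simp only [ruleHead, mkFun] at h
    split at h
    · rename_i hc
      simp only [varT] at h
      split at h
      · rename_i hq
        obtain ⟨rfl⟩ : i = x := by simpa using h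
        exact ⟨by rw [hq], hc.1, hc.2⟩
      · exact absurd h (by simp)
    · exact absurd h (by simp)

lemma ruleHead_cons_mem {μ : S.R} {j : ℕ} (hj : 1 ≤ j ∧ j ≤ S.rar μ) :
    ruleHead S μ [j] = some (Sum.inr j) := by
  simp only [ruleHead, mkFun, arS]
  exact (if_pos hj).trans rfl

lemma substExt_ruleHead_nil (σ : ℕ → PTerm (Sig ⊕ S.R) ℕ) (μ : S.R) :
    substExt σ (ruleHead S μ) [] = some (Sum.inl (Sum.inr μ)) := by
  unfold substExt
  rw [dif_neg]
  · rfl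
  · rintro ⟨x, p₀, q, hpq, hr⟩
    obtain ⟨hx, -⟩ := ruleHead_inr S hr
    subst hx
    simp at hpq

lemma substExt_spec {V : Type} (σ : V → PTerm Sig V) (t : PTerm Sig V) (p : Pos)
    (x : V) (q : Pos)
    (hw : ∃ p₀, p = p₀ ++ q ∧ t p₀ = some (Sum.inr x))
    (uniq : ∀ (x' : V) (p₀' q' : Pos), p = p₀' ++ q' → t p₀' = some (Sum.inr x') →
      x' = x ∧ q' = q) :
    substExt σ t p = σ x q := by
  obtain ⟨p₀, hpq, ht⟩ := hw
  have h : ∃ x : V, ∃ p₀ q : Pos, p = p₀ ++ q ∧ t p₀ = some (Sum.inr x) :=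
    ⟨x, p₀, q, hpq, ht⟩
  unfold substExt
  rw [dif_pos h]
  obtain ⟨heq, hr⟩ := h.choose_spec.choose_spec.choose_spec
  obtain ⟨hx', hq'⟩ := uniq _ _ _ heq hr
  exact congrArg₂ σ hx' hq'

lemma substExt_ruleHead_cons (σ : ℕ → PTerm (Sig ⊕ S.R) ℕ) (μ : S.R) {j : ℕ} (q : Pos)
    (hj : 1 ≤ j ∧ j ≤ S.rar μ) :
    substExt σ (ruleHead S μ) (j :: q) = σ j q := by
  apply substExt_spec
  · exact ⟨[j], rfl, ruleHead_cons_mem S hj⟩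
  · intro x' p₀' q' hpq ht
    obtain ⟨hp, -⟩ := ruleHead_inr S ht
    subst hp
    rw [List.cons_append, List.nil_append] at hpq
    obtain ⟨h1, h2⟩ := List.cons.inj hpq
    exact ⟨h1.symm, h2.symm⟩

lemma substExt_varT (σ : ℕ → PTerm (Sig ⊕ S.R) ℕ) (j : ℕ) :
    substExt σ (varT j) = σ j := by
  funext p
  apply substExt_spec
  · exact ⟨[], by simp, rfl⟩
  · intro x' p₀' q' hpq ht
    simp only [varT] at ht
    split at ht
    · rename_i hp0
      subst hp0
      rw [List.nil_append] at hpq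
      exact ⟨by simpa using ht.symm, hpq.symm⟩
    · exact absurd ht (by simp)

lemma liftT_varT (j : ℕ) : liftT S (varT j) = (varT j : PTerm (Sig ⊕ S.R) ℕ) := by
  funext p
  simp only [liftT, varT]
  split <;> rfl

end Helpers
section StepA

variable {Sig : Type} {ar : Sig → ℕ} (S : RuleSys Sig ar)

lemma chain_len {t : PTerm (Sig ⊕ S.R) ℕ} {ps : ℕ → Pos} (h0 : ps 0 = [])
    (hc : CollSeqInf S t ps) : ∀ i, (ps i).length = i := by
  intro i
  induction i with
  | zero => simp [h0]
  | succ n ih =>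
    obtain ⟨μ, j, -, -, -, -, hsucc⟩ := hc n
    simp [hsucc, ih]

lemma chain_prefix {t : PTerm (Sig ⊕ S.R) ℕ} {ps : ℕ → Pos}
    (hc : CollSeqInf S t ps) : ∀ i i', i ≤ i' → ps i <+: ps i' := by
  intro i i' h
  obtain ⟨m, rfl⟩ := Nat.exists_eq_add_of_le h
  clear h
  induction m with
  | zero => exact List.prefix_refl _
  | succ n ih =>
    obtain ⟨μ, j, -, -, -, -, hsucc⟩ := hc (i + n)
    have : ps (i + (n + 1)) = ps (i + n) ++ [j] := by
      rw [← hsucc]; ring_nf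
    rw [this]
    exact ih.trans (List.prefix_append _ _)

lemma step_preserves_hasColl {s t : PTerm (Sig ⊕ S.R) ℕ} {p : Pos}
    (hstep : IsStep (tgtRules S) s p t) : HasColl S s → HasColl S t := by
  classical
  rintro ⟨ps, h0, hc⟩
  obtain ⟨hpos, lr, hlr, σ, hmatch, hrepl⟩ := hstep
  obtain ⟨μ₀, rfl⟩ := hlr
  have hlen := chain_len S h0 hc
  have hpref := chain_prefix S hc
  obtain ⟨k, hk, hmax⟩ : ∃ k, ps k <+: p ∧ ∀ m, k < m → m ≤ p.length → ¬ ps m <+: p := by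
    refine ⟨Nat.findGreatest (fun i => ps i <+: p) p.length, ?_, ?_⟩
    · exact Nat.findGreatest_spec (P := fun i => ps i <+: p) (Nat.zero_le _)
        (show ps 0 <+: p by rw [h0]; exact List.nil_prefix)
    · intro m h1 h2
      exact Nat.findGreatest_is_greatest h1 h2
  obtain ⟨μ, j, hμ, hj1, hj2, hrhs, hsucc⟩ := hc k
  by_cases hpk : p = ps k
  · -- Case A : redex on the chain
    subst hpk
    have hroot : s (ps k) = some (Sum.inl (Sum.inr μ₀)) := by
      have h1 := congrFun hmatch []
      rw [substExt_ruleHead_nil] at h1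
      simpa [subAt] using h1
    have hμ0 : μ₀ = μ := by
      rw [hμ] at hroot
      simpa using hroot.symm
    subst hμ0
    have hσj : ∀ q : Pos, σ j q = s (ps (k + 1) ++ q) := by
      intro q
      have h1 := congrFun hmatch (j :: q)
      rw [substExt_ruleHead_cons S σ μ₀ q ⟨hj1, hj2⟩] at h1
      rw [← h1]
      simp [subAt, hsucc]
    have hrepl' : t = replAt s (σ j) (ps k) := by
      rw [hrepl, hrhs, liftT_varT, substExt_varT]
    have hdropk : (ps (k + 1)).drop (k + 1) = [] := by
      rw [List.drop_eq_nil_iff]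
      rw [hlen]
    set ps' : ℕ → Pos := fun i => if i ≤ k then ps i else ps k ++ (ps (i + 1)).drop (k + 1)
      with hps'
    have hps'k : ∀ i, k ≤ i → ps' i = ps k ++ (ps (i + 1)).drop (k + 1) := by
      intro i hki
      rcases eq_or_lt_of_le hki with rfl | hlt
      · simp only [hps', if_pos (le_refl k), hdropk, List.append_nil]
      · simp only [hps', if_neg (not_le_of_gt hlt)]
    have hshift : ∀ i, k ≤ i → ps (k + 1) ++ (ps (i + 1)).drop (k + 1) = ps (i + 1) := by
      intro i hki
      obtain ⟨r, hr⟩ := hpref (k + 1) (i + 1) (by omega)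
      have hD : (ps (i + 1)).drop (k + 1) = r := by
        rw [← hr]
        have hdl : (ps (k + 1) ++ r).drop (ps (k + 1)).length = r := List.drop_left
        rw [hlen] at hdl
        exact hdl
      rw [hD, hr]
    have ht : ∀ i, k ≤ i → t (ps' i) = s (ps (i + 1)) := by
      intro i hki
      rw [hps'k i hki, hrepl']
      simp only [replAt, if_pos (List.prefix_append _ _)]
      rw [List.drop_left, hσj, hshift i hki]
    have hts : ∀ i, i < k → t (ps i) = s (ps i) := by
      intro i hik
      rw [hrepl']
      simp only [replAt]
      rw [if_neg]
      intro hpre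
      have hll := hpre.length_le
      rw [hlen, hlen] at hll
      omega
    refine ⟨ps', ?_, ?_⟩
    · simp only [hps', if_pos (Nat.zero_le k), h0]
    · intro i
      by_cases hik : i < k
      · obtain ⟨μ', j', hμ', hj1', hj2', hrhs', hsucc'⟩ := hc i
        refine ⟨μ', j', ?_, hj1', hj2', hrhs', ?_⟩
        · simp only [hps', if_pos (le_of_lt hik)]
          rw [hts i hik]; exact hμ'
        · simp only [hps', if_pos (le_of_lt hik), if_pos hik.nat_succ_le]
          exact hsucc'
      · push_neg at hik
        obtain ⟨μ', j', hμ', hj1', hj2', hrhs', hsucc'⟩ := hc (i + 1)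
        refine ⟨μ', j', ?_, hj1', hj2', hrhs', ?_⟩
        · rw [ht i hik]; exact hμ'
        · have hik1 : k ≤ i + 1 := by omega
          rw [hps'k (i + 1) hik1, hps'k i hik, hsucc']
          rw [List.drop_append_of_le_length (by rw [hlen]; omega)]
          rw [List.append_assoc]
  · -- Case B : redex off the chain
    obtain ⟨w, hw⟩ := hk
    match w, hw with
    | [], hw => exact absurd (by rw [← hw, List.append_nil]) hpk
    | j' :: r, hw =>
    have hplen : k + 1 ≤ p.length := by
      rw [← hw, List.length_append, hlen]
      simp only [List.length_cons]
      omega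
    have hnotk1 : ¬ ps (k + 1) <+: p := hmax (k + 1) (by omega) hplen
    have hne : j' ≠ j := by
      rintro rfl
      apply hnotk1
      rw [hsucc, ← hw]
      rw [List.prefix_append_right_inj]
      exact ⟨r, rfl⟩
    have hnp : ∀ i, ¬ p <+: ps i := by
      intro i hpi
      rcases le_or_gt i k with hik | hik
      · have hll := hpi.length_le
        rw [hlen] at hll
        have hll2 : k + 1 ≤ i := le_trans hplen hll
        omega
      · obtain ⟨r₂, hr₂⟩ := hpref (k + 1) i hik
        rw [← hr₂, hsucc, ← hw] at hpi
        rw [List.append_assoc, List.prefix_append_right_inj] at hpi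
        simp only [List.singleton_append, List.cons_prefix_cons] at hpi
        exact hne hpi.1
    have hts : ∀ i, t (ps i) = s (ps i) := by
      intro i
      rw [hrepl]
      simp only [replAt]
      rw [if_neg (hnp i)]
    refine ⟨ps, h0, fun i => ?_⟩
    obtain ⟨μ', j'', hμ', hj1', hj2', hrhs', hsucc'⟩ := hc i
    exact ⟨μ', j'', by rw [hts i]; exact hμ', hj1', hj2', hrhs', hsucc'⟩

end StepA
section Rest

variable {Sig : Type} {ar : Sig → ℕ}

lemma tdist_agree {V : Type} {t u : PTerm Sig V} {n : ℕ}
    (h : tdist t u < (2 : ℝ)⁻¹ ^ n) : ∀ p : Pos, p.length ≤ n → t p = u p := by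
  intro p hp
  by_cases htu : t = u
  · rw [htu]
  · by_contra hne
    unfold tdist at h
    rw [if_neg htu] at h
    have hmem : p.length ∈ {m : ℕ | ∃ q : Pos, q.length = m ∧ t q ≠ u q} := ⟨p, rfl, hne⟩
    have hle : sInf {m : ℕ | ∃ q : Pos, q.length = m ∧ t q ≠ u q} ≤ p.length :=
      Nat.sInf_le hmem
    have hlt : n < sInf {m : ℕ | ∃ q : Pos, q.length = m ∧ t q ≠ u q} := by
      have h2 : (0:ℝ) < 2⁻¹ := by norm_num
      have h3 : (2:ℝ)⁻¹ < 1 := by norm_num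
      exact (pow_lt_pow_iff_right_of_lt_one₀ h2 h3).mp h
    omega

variable (S : RuleSys Sig ar)

open Classical in
noncomputable def nextPos (u : PTerm (Sig ⊕ S.R) ℕ) (p : Pos) : Pos :=
  if h : ∃ (μ : S.R) (j : ℕ), u p = some (Sum.inl (Sum.inr μ)) ∧ 1 ≤ j ∧
      j ≤ S.rar μ ∧ S.rhs μ = varT j then p ++ [h.choose_spec.choose] else p

lemma nextPos_eq {u : PTerm (Sig ⊕ S.R) ℕ} {p : Pos} (μ : S.R) (j : ℕ)
    (hμ : u p = some (Sum.inl (Sum.inr μ))) (hj1 : 1 ≤ j) (hj2 : j ≤ S.rar μ)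
    (hrhs : S.rhs μ = varT j) : nextPos S u p = p ++ [j] := by
  have hex : ∃ (μ : S.R) (j : ℕ), u p = some (Sum.inl (Sum.inr μ)) ∧ 1 ≤ j ∧
      j ≤ S.rar μ ∧ S.rhs μ = varT j := ⟨μ, j, hμ, hj1, hj2, hrhs⟩
  unfold nextPos
  rw [dif_pos hex]
  obtain ⟨hμ', hj1', hj2', hrhs'⟩ := hex.choose_spec.choose_spec
  have hμeq : hex.choose = μ := by
    have h2 := hμ.symm.trans hμ'
    simpa using h2.symm
  have hjeq := varT_inj (Sig := Sig)
    ((hrhs'.symm.trans (congrArg S.rhs hμeq)).trans hrhs).symm.symm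
  exact congrArg (fun z => p ++ [z]) hjeq

/-- determinism of collapsing sequences and finite-to-infinite gluing. -/
lemma hasColl_of_finite {u : PTerm (Sig ⊕ S.R) ℕ}
    (hfin : ∀ n : ℕ, ∃ ps : ℕ → Pos, ps 0 = [] ∧ CollSeq S u ps n) : HasColl S u := by
  classical
  set ps' : ℕ → Pos := fun i => (nextPos S u)^[i] [] with hps'def
  have hps'0 : ps' 0 = [] := rfl
  have hps'succ : ∀ i, ps' (i + 1) = nextPos S u (ps' i) := fun i =>
    Function.iterate_succ_apply' (nextPos S u) i []
  have hdet : ∀ (ps : ℕ → Pos) (n : ℕ), ps 0 = [] → CollSeq S u ps n →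
      ∀ i, i < n → ps' i = ps i := by
    intro ps n h0 hcs i
    induction i with
    | zero => intro _; rw [hps'0, h0]
    | succ m ih =>
      intro hm
      have hmn : m < n := by omega
      have heq : ps' m = ps m := ih hmn
      obtain ⟨μ, j, hμ, hj1, hj2, hrhs, hsucc⟩ := hcs m hm
      rw [hps'succ, hsucc, ← heq]
      exact nextPos_eq S μ j (by rw [heq]; exact hμ) hj1 hj2 hrhs
  refine ⟨ps', hps'0, fun i => ?_⟩
  obtain ⟨ps, h0, hcs⟩ := hfin (i + 2)
  obtain ⟨μ, j, hμ, hj1, hj2, hrhs, hsucc⟩ := hcs i (by omega)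
  refine ⟨μ, j, ?_, hj1, hj2, hrhs, ?_⟩
  · rw [hdet ps (i + 2) h0 hcs i (by omega)]; exact hμ
  · rw [hdet ps (i + 2) h0 hcs (i + 1) (by omega), hdet ps (i + 2) h0 hcs i (by omega)]
    exact hsucc

lemma isTerm_of_approx {V : Type} {arr : Sig → ℕ} {u : PTerm Sig V}
    (happ : ∀ n : ℕ, ∃ t : PTerm Sig V, IsTerm arr t ∧
      ∀ p : Pos, p.length ≤ n → t p = u p) : IsTerm arr u := by
  refine ⟨?_, ?_, ?_⟩
  · obtain ⟨t, ht, hag⟩ := happ 0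
    have := hag [] (by simp)
    simpa [posOf, ← this] using ht.1
  · intro p q hpq
    obtain ⟨t, ht, hag⟩ := happ (p ++ q).length
    have h1 := hag (p ++ q) le_rfl
    have h2 := hag p (by simp)
    have hp : p ++ q ∈ posOf t := by simpa [posOf, h1] using hpq
    have := ht.2.1 p q hp
    simpa [posOf, h2] using this
  · intro p h hp i
    obtain ⟨t, ht, hag⟩ := happ (p.length + 1)
    have h1 := hag p (by omega)
    have h2 := hag (p ++ [i]) (by simp)
    have := ht.2.2 p h (by rw [h1, hp]) i
    constructor
    · intro hmem
      exact this.mp (by simpa [posOf, h2] using hmem)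
    · intro hb
      have := this.mpr hb
      simpa [posOf, h2] using this

lemma hasColl_of_approx {u : PTerm (Sig ⊕ S.R) ℕ}
    (happ : ∀ n : ℕ, ∃ t : PTerm (Sig ⊕ S.R) ℕ, HasColl S t ∧
      ∀ p : Pos, p.length ≤ n → t p = u p) : HasColl S u := by
  apply hasColl_of_finite
  intro n
  obtain ⟨t, ⟨ps, h0, hc⟩, hag⟩ := happ n
  have hlen := chain_len S h0 hc
  refine ⟨ps, h0, fun i hi => ?_⟩
  obtain ⟨μ, j, hμ, hj1, hj2, hrhs, hsucc⟩ := hc i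
  refine ⟨μ, j, ?_, hj1, hj2, hrhs, hsucc⟩
  rw [← hag (ps i) (by rw [hlen]; omega)]
  exact hμ

lemma not_NF_of_hasColl {u : PTerm (Sig ⊕ S.R) ℕ}
    (hterm : IsTerm (arS ar S) u) (h : HasColl S u) : ¬ NF (tgtRules S) u := by
  obtain ⟨ps, h0, hc⟩ := h
  obtain ⟨μ, j, hμ, hj1, hj2, hrhs, -⟩ := hc 0
  rw [h0] at hμ
  intro hNF
  set σ : ℕ → PTerm (Sig ⊕ S.R) ℕ := fun i => subAt u [i] with hσ
  apply hNF [] (replAt u (substExt σ (liftT S (S.rhs μ))) [])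
  refine ⟨by simp [posOf, hμ], (ruleHead S μ, liftT S (S.rhs μ)), ⟨μ, rfl⟩, σ, ?_, rfl⟩
  funext q
  have hsub : subAt u [] q = u q := by simp [subAt]
  rw [hsub]
  match q with
  | [] => rw [substExt_ruleHead_nil, hμ]
  | i :: q' =>
    by_cases hi : 1 ≤ i ∧ i ≤ S.rar μ
    · rw [substExt_ruleHead_cons S σ μ q' hi]
      simp [hσ, subAt]
    · -- out of range : both sides none
      have hnotpos : [i] ∉ posOf u := by
        intro hmem
        have := (hterm.2.2 [] _ hμ i).mp (by simpa using hmem)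
        exact hi ⟨this.1, by simpa [arS, arity] using this.2⟩
      have hunone : u (i :: q') = none := by
        by_contra hcon
        have hq : i :: q' ∈ posOf u := by
          simp [posOf, Option.isSome_iff_ne_none, hcon]
        have := hterm.2.1 [i] q' (by simpa using hq)
        exact hnotpos this
      rw [hunone]
      symm
      unfold substExt
      rw [dif_neg]
      · simp only [ruleHead, mkFun]
        rw [if_neg (by simpa [arS] using hi)]
      · rintro ⟨x, p₀, q₀, hpq, hr⟩
        obtain ⟨hp, hx1, hx2⟩ := ruleHead_inr S hr
        subst hp
        rw [List.cons_append, List.nil_append] at hpq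
        obtain ⟨h1, -⟩ := List.cons.inj hpq
        exact hi ⟨h1 ▸ hx1, h1 ▸ hx2⟩

end Rest
/-- A multistep admitting an infinite collapsing sequence starting at the root is
not weakly normalizing in `tgt_T`: no (strongly convergent) `tgt_T`-reduction from
it reaches a normal form. -/
theorem stmt16 {Sig : Type} {ar : Sig → ℕ} (S : RuleSys Sig ar)
    (ψ : PTerm (Sig ⊕ S.R) ℕ) (hterm : IsTerm (arS ar S) ψ) (hclosed : Closed ψ)
    (hcoll : ∃ ps : ℕ → Pos, ps 0 = [] ∧ CollSeqInf S ψ ps) :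
    ∀ (β : Ordinal) (Sq : RedSeq (arS ar S) (tgtRules S) β)
      (u : PTerm (Sig ⊕ S.R) ℕ),
      Sq.src 0 = ψ → Sq.Converges u → ¬ NF (tgtRules S) u := by
  intro β Sq u hsrc hconv
  have key : ∀ α : Ordinal, α < β → HasColl S (Sq.src α) := by
    intro α
    induction α using Ordinal.induction with
    | h α ih =>
      intro hα
      rcases Ordinal.zero_or_succ_or_isSuccLimit α with h0 | ⟨γ, hγ'⟩ | hlim
      · rw [h0, hsrc]; exact hcoll
      · have hγ : α = Order.succ γ := hγ'.symm
        have hγα : γ < α := by rw [hγ]; exact Order.lt_succ γ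
        have hγβ : γ < β := lt_trans hγα hα
        have hcoh : Sq.src (γ + 1) = Sq.tgt γ := by
          apply Sq.succCoh
          rw [Ordinal.add_one_eq_succ, ← hγ]
          exact hα
        have hα1 : α = γ + 1 := by rw [hγ, Ordinal.add_one_eq_succ]
        rw [hα1, hcoh]
        exact step_preserves_hasColl S (Sq.isStep γ hγβ) (ih γ hγα hγβ)
      · apply hasColl_of_approx
        intro n
        obtain ⟨α₀, hα₀, hprop⟩ := Sq.limSrc α hα hlim n
        have hγα : α₀ + 1 < α := by
          rw [Ordinal.add_one_eq_succ]
          exact hlim.succ_lt hα₀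
        have hγβ : α₀ + 1 < β := lt_trans hγα hα
        have hself : α₀ < α₀ + 1 := by
          rw [Ordinal.add_one_eq_succ]; exact Order.lt_succ α₀
        refine ⟨Sq.tgt (α₀ + 1), ?_, ?_⟩
        · exact step_preserves_hasColl S (Sq.isStep _ hγβ) (ih _ hγα hγβ)
        · exact tdist_agree (hprop (α₀ + 1) hself hγα)
  rcases hconv with ⟨h0, hu⟩ | ⟨α, hβ, hu⟩ | ⟨hlim, hdist, hdepth⟩
  · rw [hu, hsrc]
    exact not_NF_of_hasColl S hterm hcoll
  · have hαβ : α < β := by rw [hβ, Ordinal.add_one_eq_succ]; exact Order.lt_succ α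
    rw [hu]
    exact not_NF_of_hasColl S (Sq.tgtTerm α hαβ)
      (step_preserves_hasColl S (Sq.isStep α hαβ) (key α hαβ))
  · have happ : ∀ n : ℕ, ∃ t : PTerm (Sig ⊕ S.R) ℕ,
        (HasColl S t ∧ IsTerm (arS ar S) t) ∧
        ∀ p : Pos, p.length ≤ n → t p = u p := by
      intro n
      obtain ⟨α₀, hα₀, hprop⟩ := hdist n
      have hγβ : α₀ + 1 < β := by
        rw [Ordinal.add_one_eq_succ]
        exact hlim.succ_lt hα₀
      have hself : α₀ < α₀ + 1 := by
        rw [Ordinal.add_one_eq_succ]; exact Order.lt_succ α₀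
      refine ⟨Sq.tgt (α₀ + 1), ⟨?_, Sq.tgtTerm _ hγβ⟩, ?_⟩
      · exact step_preserves_hasColl S (Sq.isStep _ hγβ) (key _ hγβ)
      · exact tdist_agree (hprop (α₀ + 1) hself hγβ)
    have hTu : IsTerm (arS ar S) u :=
      isTerm_of_approx (fun n => (happ n).imp fun t ht => ⟨ht.1.2, ht.2⟩)
    have hCu : HasColl S u :=
      hasColl_of_approx S (fun n => (happ n).imp fun t ht => ⟨ht.1.1, ht.2⟩)
    exact not_NF_of_hasColl S hTu hCu

end IRW
end
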